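/- Let Λ be the 2i×2i symmetric matrix with entries Λ_{a,b} = x_{2i+1} + x_a δ_{a,b} for positive reals x₁,…,x_{2i+1}, and let E = Σ_{a=1}^{2i+1} ∏_{b≠a} x_b. Then the inverse of Λ has entries (Λ⁻¹)_{a,b} = (1/E) · ∂E/∂x_a when a = b, and (Λ⁻¹)_{a,b} = −(x₁···x_{2i+1})/(E · x_a x_b) when a ≠ b. -/

import Mathlib

lemma aux_mul (n : ℕ) (x : Fin (n + 1) → ℝ) (hx : ∀ j, 0 < x j) :
    (Matrix.of fun a b : Fin n =>
        x (Fin.last n) + if a = b then x a.castSucc else 0) *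
      (Matrix.of fun a b : Fin n =>
        if a = b then
          (∑ c ∈ Finset.univ.erase a.castSucc,
              ∏ d ∈ (Finset.univ.erase a.castSucc).erase c, x d)
            / (∑ c : Fin (n + 1), ∏ d ∈ Finset.univ.erase c, x d)
        else
          -((∏ j, x j)
            / ((∑ c : Fin (n + 1), ∏ d ∈ Finset.univ.erase c, x d)
                * x a.castSucc * x b.castSucc))) = 1 := by
  have hx' : ∀ j, x j ≠ 0 := fun j => (hx j).ne'
  set E := ∑ c : Fin (n + 1), ∏ d ∈ Finset.univ.erase c, x d with hEdef
  have hEpos : 0 < E := Finset.sum_pos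
    (fun c _ => Finset.prod_pos fun d _ => hx d) Finset.univ_nonempty
  have hE0 : E ≠ 0 := hEpos.ne'
  have hQ : ∀ c : Fin (n + 1),
      x c * ∏ d ∈ Finset.univ.erase c, x d = ∏ j, x j :=
    fun c => Finset.mul_prod_erase Finset.univ x (Finset.mem_univ c)
  have hF3 : ∑ b : Fin n, ∏ d ∈ Finset.univ.erase b.castSucc, x d
      = E - ∏ d ∈ Finset.univ.erase (Fin.last n), x d := by
    rw [hEdef, Fin.sum_univ_castSucc]; ring
  have hD : ∀ a : Fin n,
      x a.castSucc * ∑ c ∈ Finset.univ.erase a.castSucc,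
          ∏ d ∈ (Finset.univ.erase a.castSucc).erase c, x d
        = E - ∏ d ∈ Finset.univ.erase a.castSucc, x d := by
    intro a
    rw [Finset.mul_sum]
    have step : ∀ c ∈ Finset.univ.erase a.castSucc,
        x a.castSucc * ∏ d ∈ (Finset.univ.erase a.castSucc).erase c, x d
          = ∏ d ∈ Finset.univ.erase c, x d := by
      intro c hc
      have hca : c ≠ a.castSucc := (Finset.mem_erase.mp hc).1
      rw [Finset.erase_right_comm]
      exact Finset.mul_prod_erase _ x
        (Finset.mem_erase.mpr ⟨Ne.symm hca, Finset.mem_univ _⟩)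
    rw [Finset.sum_congr rfl step,
      Finset.sum_erase_eq_sub (Finset.mem_univ a.castSucc), ← hEdef]
  have hS : ∀ c : Fin n,
      (∑ b : Fin n, (if b = c then
          (∑ c' ∈ Finset.univ.erase b.castSucc,
              ∏ d ∈ (Finset.univ.erase b.castSucc).erase c', x d) / E
        else -((∏ j, x j) / (E * x b.castSucc * x c.castSucc))))
        = (∏ d ∈ Finset.univ.erase (Fin.last n), x d) / (E * x c.castSucc) := by
    intro c
    rw [← Finset.add_sum_erase Finset.univ _ (Finset.mem_univ c)]
    rw [if_pos rfl]
    have step : ∀ b ∈ Finset.univ.erase c,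
        (if b = c then
          (∑ c' ∈ Finset.univ.erase b.castSucc,
              ∏ d ∈ (Finset.univ.erase b.castSucc).erase c', x d) / E
        else -((∏ j, x j) / (E * x b.castSucc * x c.castSucc)))
          = -((∏ d ∈ Finset.univ.erase b.castSucc, x d) / (E * x c.castSucc)) := by
      intro b hb
      rw [if_neg (Finset.mem_erase.mp hb).1, ← hQ b.castSucc,
        show E * x b.castSucc * x c.castSucc
            = x b.castSucc * (E * x c.castSucc) by ring,
        mul_div_mul_left _ _ (hx' b.castSucc)]
    rw [Finset.sum_congr rfl step]
    have hsum : ∑ b ∈ Finset.univ.erase c,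
        ((∏ d ∈ Finset.univ.erase b.castSucc, x d) / (E * x c.castSucc))
          = (E - (∏ d ∈ Finset.univ.erase (Fin.last n), x d)
              - ∏ d ∈ Finset.univ.erase c.castSucc, x d) / (E * x c.castSucc) := by
      rw [← Finset.sum_div, Finset.sum_erase_eq_sub (Finset.mem_univ c), hF3]
    rw [Finset.sum_neg_distrib, hsum]
    have h1 : (∑ c' ∈ Finset.univ.erase c.castSucc,
        ∏ d ∈ (Finset.univ.erase c.castSucc).erase c', x d) / E
          = (E - ∏ d ∈ Finset.univ.erase c.castSucc, x d) / (E * x c.castSucc) := by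
      rw [← hD c,
        show x c.castSucc * ∑ c' ∈ Finset.univ.erase c.castSucc,
            ∏ d ∈ (Finset.univ.erase c.castSucc).erase c', x d
          = (∑ c' ∈ Finset.univ.erase c.castSucc,
            ∏ d ∈ (Finset.univ.erase c.castSucc).erase c', x d) * x c.castSucc by ring,
        show E * x c.castSucc = E * x c.castSucc from rfl,
        mul_div_mul_right _ _ (hx' c.castSucc)]
    rw [h1, ← neg_div, ← add_div]
    congr 1
    ring
  ext a c
  rw [Matrix.mul_apply, Matrix.one_apply]
  simp only [Matrix.of_apply, add_mul, ite_mul, zero_mul, Finset.sum_add_distrib,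
    Finset.sum_ite_eq, Finset.mem_univ, if_true]
  rw [← Finset.mul_sum, hS c]
  by_cases hac : a = c
  · subst hac
    rw [if_pos rfl, if_pos rfl]
    rw [mul_div_assoc', hQ (Fin.last n), ← hQ a.castSucc,
      show E * x a.castSucc = x a.castSucc *  E by ring,
      mul_div_mul_left _ _ (hx' a.castSucc),
      mul_div_assoc', hD a, ← add_div,
      show (∏ d ∈ Finset.univ.erase a.castSucc, x d)
          + (E - ∏ d ∈ Finset.univ.erase a.castSucc, x d) = E by ring,
      div_self hE0]
  · rw [if_neg hac, if_neg hac]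
    rw [mul_div_assoc', hQ (Fin.last n), mul_neg, mul_div_assoc',
      show E * x a.castSucc * x c.castSucc
          = x a.castSucc * (E * x c.castSucc) by ring,
      mul_div_mul_left _ _ (hx' a.castSucc)]
    ring

/-- Let `Λ` be the `2i × 2i` symmetric matrix with entries
`Λ_{a,b} = x_{2i+1} + x_a δ_{a,b}` for positive reals `x₁, …, x_{2i+1}`, and let
`E = ∑_{a=1}^{2i+1} ∏_{b ≠ a} x_b`.  Then the inverse of `Λ` has entries
`(Λ⁻¹)_{a,b} = (1/E) · ∂E/∂x_a` when `a = b` (where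
`∂E/∂x_a = ∑_{c ≠ a} ∏_{b ≠ a, c} x_b`), and
`(Λ⁻¹)_{a,b} = −(x₁ ⋯ x_{2i+1}) / (E · x_a x_b)` when `a ≠ b`. -/
theorem inv_diag_plus_const (i : ℕ) (x : Fin (2 * i + 1) → ℝ) (hx : ∀ j, 0 < x j)
    (a b : Fin (2 * i)) :
    (Matrix.of fun a b : Fin (2 * i) =>
        x (Fin.last (2 * i)) + if a = b then x a.castSucc else 0)⁻¹ a b
      = if a = b then
          (∑ c ∈ Finset.univ.erase a.castSucc,
              ∏ d ∈ (Finset.univ.erase a.castSucc).erase c, x d)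
            / (∑ c : Fin (2 * i + 1), ∏ d ∈ Finset.univ.erase c, x d)
        else
          -((∏ j, x j)
            / ((∑ c : Fin (2 * i + 1), ∏ d ∈ Finset.univ.erase c, x d)
                * x a.castSucc * x b.castSucc)) := by
  rw [Matrix.inv_eq_right_inv (aux_mul (2 * i) x hx)]
  rfl
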